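/- Under the Physarum dynamics, for any s₀-s₁ cut S the capacity C_S(t) = Σ_{e ∈ δ(S)} D_e(t) satisfies C_S(t) ≥ 1 + (C_S(0) - 1)·e^{-t}, with equality for the cut S = {s₀}. In particular, the capacity of the source cut converges to 1. -/

import Mathlib

open Finset Filter

private lemma physarum_aux (C R : ℝ → ℝ)
    (hC : ∀ t, 0 ≤ t → HasDerivAt C (R t - C t) t)
    (hR : ∀ t, 0 ≤ t → 1 ≤ R t) :
    ∀ t, 0 ≤ t → 1 + (C 0 - 1) * Real.exp (-t) ≤ C t := by
  set f : ℝ → ℝ := fun t => (C t - 1) * Real.exp t with hf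
  have hderiv : ∀ t, 0 ≤ t → HasDerivAt f ((R t - 1) * Real.exp t) t := by
    intro t ht
    have h := ((hC t ht).sub_const 1).fun_mul (Real.hasDerivAt_exp t)
    refine h.congr_deriv ?_
    ring
  have hmono : MonotoneOn f (Set.Ici (0:ℝ)) := by
    apply monotoneOn_of_hasDerivWithinAt_nonneg (convex_Ici 0)
      (f' := fun t => (R t - 1) * Real.exp t)
    · intro t ht
      exact (hderiv t ht).continuousAt.continuousWithinAt
    · intro t ht
      rw [interior_Ici] at ht
      exact (hderiv t ht.le).hasDerivWithinAt
    · intro t ht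
      rw [interior_Ici] at ht
      exact mul_nonneg (by linarith [hR t ht.le]) (Real.exp_pos t).le
  intro t ht
  have h0 : f 0 ≤ f t := hmono Set.self_mem_Ici ht ht
  have : (C 0 - 1) * Real.exp 0 ≤ (C t - 1) * Real.exp t := h0
  rw [Real.exp_zero, mul_one] at this
  have hpos : (0:ℝ) < Real.exp t := Real.exp_pos t
  have hprod : Real.exp (-t) * Real.exp t = 1 := by
    rw [← Real.exp_add]; simp
  have h2 := mul_le_mul_of_nonneg_right this (Real.exp_pos (-t)).le
  rw [mul_assoc, mul_comm (Real.exp t), hprod, mul_one] at h2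
  linarith

theorem cut_capacity_bound {E : Type*} [Fintype E] [DecidableEq E]
    (D Q : ℝ → E → ℝ)
    (hdyn : ∀ t e, 0 ≤ t → HasDerivAt (fun s => D s e) (|Q t e| - D t e) t)
    (S S₀ : Finset E)
    (hcut : ∀ t, 0 ≤ t → 1 ≤ ∑ e ∈ S, |Q t e|)
    (hsrc : ∀ t, 0 ≤ t → ∑ e ∈ S₀, |Q t e| = 1) :
    (∀ t, 0 ≤ t →
      1 + ((∑ e ∈ S, D 0 e) - 1) * Real.exp (-t) ≤ ∑ e ∈ S, D t e) ∧
    (∀ t, 0 ≤ t →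
      ∑ e ∈ S₀, D t e = 1 + ((∑ e ∈ S₀, D 0 e) - 1) * Real.exp (-t)) ∧
    Tendsto (fun t => ∑ e ∈ S₀, D t e) atTop (nhds 1) := by
  have hsum : ∀ (T : Finset E) t, 0 ≤ t →
      HasDerivAt (fun s => ∑ e ∈ T, D s e)
        ((∑ e ∈ T, |Q t e|) - ∑ e ∈ T, D t e) t := by
    intro T t ht
    rw [← Finset.sum_sub_distrib]
    exact HasDerivAt.fun_sum fun e _ => hdyn t e ht
  have h1 := physarum_aux (fun t => ∑ e ∈ S, D t e) (fun t => ∑ e ∈ S, |Q t e|)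
    (hsum S) hcut
  have h2 := physarum_aux (fun t => ∑ e ∈ S₀, D t e) (fun t => ∑ e ∈ S₀, |Q t e|)
    (hsum S₀) (fun t ht => (hsrc t ht).ge)
  have h3 := physarum_aux (fun t => 2 - ∑ e ∈ S₀, D t e) (fun t => 2 - ∑ e ∈ S₀, |Q t e|)
    (fun t ht => by
      have := (hsum S₀ t ht).const_sub 2
      refine this.congr_deriv ?_; ring)
    (fun t ht => by show (1:ℝ) ≤ 2 - ∑ e ∈ S₀, |Q t e|; rw [hsrc t ht]; norm_num)
  have heq : ∀ t, 0 ≤ t →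
      ∑ e ∈ S₀, D t e = 1 + ((∑ e ∈ S₀, D 0 e) - 1) * Real.exp (-t) := by
    intro t ht
    have a := h2 t ht
    have b := h3 t ht
    nlinarith [Real.exp_pos (-t)]
  refine ⟨h1, heq, ?_⟩
  have hlim : Tendsto (fun t : ℝ => 1 + ((∑ e ∈ S₀, D 0 e) - 1) * Real.exp (-t))
      atTop (nhds 1) := by
    have : Tendsto (fun t : ℝ => Real.exp (-t)) atTop (nhds 0) :=
      Real.tendsto_exp_neg_atTop_nhds_zero
    have := (this.const_mul ((∑ e ∈ S₀, D 0 e) - 1)).const_add 1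
    simpa using this
  apply hlim.congr'
  filter_upwards [eventually_ge_atTop (0:ℝ)] with t ht
  exact (heq t ht).symm
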